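/- The number of diagonalizations of endomorphisms of an n-dimensional F_q-vector space, i.e., pairs (α, {V_1,...,V_n}) where V = V_1 ⊕ ... ⊕ V_n with dim V_i = 1 and α restricts to a scalar on each V_i, has generating series ∑_n d_n x^n/γ_n = exp(qx/(q-1)). -/

import Mathlib

/-- `γ_m = |GL_m(F_q)| = ∏_{i=0}^{m-1} (q^m - q^i)`. -/
def gammaQ (q m : ℕ) : ℕ := ∏ i ∈ Finset.range m, (q ^ m - q ^ i)

/-- The number of diagonalizations of endomorphisms of `F^n`: pairs
`(α, {V₁, …, Vₙ})` with `F^n = V₁ ⊕ ⋯ ⊕ Vₙ`, `dim Vᵢ = 1`, and `α` restricting to a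
scalar on each `Vᵢ`. -/
noncomputable def diagCount (F : Type) [Field F] [Fintype F] (n : ℕ) : ℕ :=
  Nat.card {p : ((Fin n → F) →ₗ[F] (Fin n → F)) × Finset (Submodule F (Fin n → F)) //
    p.2.card = n ∧
    (⊥ : Submodule F (Fin n → F)) ∉ p.2 ∧
    sSupIndep (p.2 : Set (Submodule F (Fin n → F))) ∧
    sSup (p.2 : Set (Submodule F (Fin n → F))) = ⊤ ∧
    ∀ W ∈ p.2, Module.finrank F W = 1 ∧ ∃ c : F, ∀ x ∈ W, p.1 x = c • x}


open Module Submodule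

section Aux

variable {F : Type} [Field F] [Fintype F] {n : ℕ}

local notation "q" => Fintype.card F

instance : Finite (Submodule F (Fin n → F)) :=
  Finite.of_injective (SetLike.coe : Submodule F (Fin n → F) → Set (Fin n → F))
    SetLike.coe_injective

instance : Finite ((Fin n → F) →ₗ[F] (Fin n → F)) :=
  Finite.of_injective (fun f => (f : (Fin n → F) → (Fin n → F))) DFunLike.coe_injective

/-- ordered decompositions into lines -/
def OD (F : Type) [Field F] (n : ℕ) : Type :=
  {f : Fin n → Submodule F (Fin n → F) //
    iSupIndep f ∧ (⨆ i, f i) = ⊤ ∧ ∀ i, finrank F (f i) = 1}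

instance : Finite (OD F n) := by unfold OD; infer_instance

/-- independent tuples -/
def LI (F : Type) [Field F] (n : ℕ) : Type :=
  {s : Fin n → (Fin n → F) // LinearIndependent F s}

instance : Finite (LI F n) := by unfold LI; infer_instance

omit [Fintype F] in
lemma finrankV : finrank F (Fin n → F) = n := by
  simp [Module.finrank_fintype_fun_eq_card]

def pi1 (s : LI F n) : OD F n :=
  ⟨fun i => F ∙ s.1 i, s.2.iSupIndep_span_singleton, by
      rw [← Submodule.span_range_eq_iSup]
      apply Submodule.eq_top_of_finrank_eq
      rw [finrank_span_eq_card s.2, Fintype.card_fin, finrankV],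
    fun i => finrank_span_singleton (s.2.ne_zero i)⟩

omit [Fintype F] in
lemma span_eq_of_mem_line (f : OD F n) (i : Fin n) {x : Fin n → F}
    (hx : x ∈ f.1 i) (hx0 : x ≠ 0) : (F ∙ x) = f.1 i := by
  apply Submodule.eq_of_le_of_finrank_eq
  · rwa [Submodule.span_singleton_le_iff_mem]
  · rw [finrank_span_singleton hx0, f.2.2.2 i]

def fiber1Equiv (f : OD F n) :
    {s : LI F n // pi1 s = f} ≃ (∀ i : Fin n, {x : Fin n → F // x ∈ f.1 i ∧ x ≠ 0}) where
  toFun s i := ⟨s.1.1 i, by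
    have h := congrFun (congrArg Subtype.val s.2) i
    constructor
    · rw [← h]; exact Submodule.mem_span_singleton_self _
    · exact s.1.2.ne_zero i⟩
  invFun v := ⟨⟨fun i => (v i).1, by
      exact iSupIndep.linearIndependent f.1 f.2.1 (fun i => (v i).2.1) (fun i => (v i).2.2)⟩, by
      apply Subtype.ext
      funext i
      exact span_eq_of_mem_line f i (v i).2.1 (v i).2.2⟩
  left_inv s := by apply Subtype.ext; apply Subtype.ext; rfl
  right_inv v := by funext i; apply Subtype.ext; rfl

lemma card_line_ne_zero (W : Submodule F (Fin n → F)) (h : finrank F W = 1) :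
    Nat.card {x : Fin n → F // x ∈ W ∧ x ≠ 0} = q - 1 := by
  have e : {x : Fin n → F // x ∈ W ∧ x ≠ 0} ≃ {y : W // ¬ (y = 0)} :=
    { toFun := fun x => ⟨⟨x.1, x.2.1⟩, by
        simp only [Submodule.mk_eq_zero]; exact x.2.2⟩
      invFun := fun y => ⟨y.1.1, y.1.2, by
        intro h0; exact y.2 (Subtype.ext h0)⟩
      left_inv := fun x => rfl
      right_inv := fun y => rfl }
  rw [Nat.card_congr e]
  letI : Fintype W := Fintype.ofFinite _
  classical
  rw [Nat.card_eq_fintype_card, Fintype.card_subtype_compl, Fintype.card_subtype_eq,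
    card_eq_pow_finrank (K := F) (V := W), h, pow_one]

lemma card_LI : Nat.card (LI F n) = gammaQ q n := by
  have h := card_linearIndependent (K := F) (V := Fin n → F) (k := n)
    (le_of_eq finrankV.symm)
  rw [finrankV] at h
  rw [LI, h, gammaQ, ← Finset.prod_range fun i => q ^ n - q ^ i]

lemma card_LI_eq : Nat.card (LI F n) = Nat.card (OD F n) * (q - 1) ^ n := by
  classical
  letI : Fintype (OD F n) := Fintype.ofFinite _
  letI : Fintype (LI F n) := Fintype.ofFinite _
  letI : ∀ f : OD F n, Fintype {s : LI F n // pi1 s = f} := fun f => Fintype.ofFinite _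
  rw [← Nat.card_congr (Equiv.sigmaFiberEquiv (pi1 (F := F) (n := n)))]
  rw [Nat.card_eq_fintype_card, Fintype.card_sigma, Nat.card_eq_fintype_card]
  have hc : ∀ f : OD F n, Fintype.card {s : LI F n // pi1 s = f} = (q - 1) ^ n := by
    intro f
    have h2 := Nat.card_congr (fiber1Equiv f)
    rw [Nat.card_eq_fintype_card, Nat.card_pi] at h2
    rw [h2]
    simp_rw [fun i => card_line_ne_zero (F := F) (f.1 i) (f.2.2.2 i)]
    simp
  simp [hc, Finset.sum_const, Finset.card_univ, mul_comm]

/-- unordered decompositions into lines -/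
def DD (F : Type) [Field F] [Fintype F] (n : ℕ) : Type :=
  {s : Finset (Submodule F (Fin n → F)) //
    s.card = n ∧
    (⊥ : Submodule F (Fin n → F)) ∉ s ∧
    sSupIndep (s : Set (Submodule F (Fin n → F))) ∧
    sSup (s : Set (Submodule F (Fin n → F))) = ⊤ ∧
    ∀ W ∈ s, finrank F W = 1}

instance : Finite (DD F n) := by unfold DD; infer_instance

omit [Fintype F] in
lemma OD_ne_bot (f : OD F n) (i : Fin n) : f.1 i ≠ ⊥ := by
  intro h
  have := f.2.2.2 i
  rw [h] at this
  simp at this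

omit [Fintype F] in
lemma OD_injective (f : OD F n) : Function.Injective f.1 :=
  f.2.1.injective (OD_ne_bot f)

noncomputable def pi2 (f : OD F n) : DD F n := by
  classical
  refine ⟨Finset.image f.1 Finset.univ, ?_, ?_, ?_, ?_, ?_⟩
  · rw [Finset.card_image_of_injective _ (OD_injective f), Finset.card_univ, Fintype.card_fin]
  · intro h
    obtain ⟨i, _, hi⟩ := Finset.mem_image.1 h
    exact OD_ne_bot f i hi
  · rw [Finset.coe_image, Finset.coe_univ, Set.image_univ]
    exact f.2.1.sSupIndep_range
  · rw [Finset.coe_image, Finset.coe_univ, Set.image_univ, sSup_range]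
    exact f.2.2.1
  · intro W hW
    obtain ⟨i, _, hi⟩ := Finset.mem_image.1 hW
    exact hi ▸ f.2.2.2 i

noncomputable def fiber2Equiv (d : DD F n) :
    {f : OD F n // pi2 f = d} ≃ (Fin n ≃ {W : Submodule F (Fin n → F) // W ∈ d.1}) := by
  classical
  letI : Fintype {W : Submodule F (Fin n → F) // W ∈ d.1} := Fintype.ofFinite _
  have hcard : Fintype.card {W : Submodule F (Fin n → F) // W ∈ d.1} = n := by
    rw [Fintype.card_coe]; exact d.2.1
  refine
    { toFun := fun f => Equiv.ofBijective
        (fun i => (⟨f.1.1 i, by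
          have h := congrArg Subtype.val f.2
          rw [← h]
          exact Finset.mem_image_of_mem _ (Finset.mem_univ i)⟩ :
          {W : Submodule F (Fin n → F) // W ∈ d.1}))
        ?_
      invFun := fun e => ⟨⟨fun i => (e i : Submodule F (Fin n → F)), ?_, ?_, ?_⟩, ?_⟩
      left_inv := ?_
      right_inv := ?_ }
  · rw [Fintype.bijective_iff_injective_and_card]
    constructor
    · intro i j hij
      exact OD_injective f.1 (congrArg Subtype.val hij)
    · rw [hcard, Fintype.card_fin]
  · -- iSupIndep
    have hs : iSupIndep (fun W : {W // W ∈ d.1} => (W : Submodule F (Fin n → F))) := by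
      have := d.2.2.2.1
      rw [sSupIndep_iff] at this
      exact this
    exact hs.comp e.injective
  · -- iSup = ⊤
    apply le_antisymm le_top
    refine le_trans (le_of_eq d.2.2.2.2.1.symm) ?_
    apply sSup_le
    intro W hW
    obtain ⟨i, hi⟩ := e.surjective ⟨W, hW⟩
    have hWe : W = ((e i : {W // W ∈ d.1}) : Submodule F (Fin n → F)) :=
      (congrArg Subtype.val hi).symm
    rw [hWe]
    exact le_iSup (fun i => ((e i : {W // W ∈ d.1}) : Submodule F (Fin n → F))) i
  · -- finrank
    intro i
    exact d.2.2.2.2.2 _ (e i).2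
  · -- pi2 = d
    apply Subtype.ext
    apply Finset.ext
    intro W
    simp only [pi2, Finset.mem_image, Finset.mem_univ, true_and]
    constructor
    · rintro ⟨i, rfl⟩; exact (e i).2
    · intro hW
      obtain ⟨i, hi⟩ := e.surjective ⟨W, hW⟩
      exact ⟨i, congrArg Subtype.val hi⟩
  · intro f
    apply Subtype.ext
    apply Subtype.ext
    rfl
  · intro e
    apply Equiv.ext
    intro i
    apply Subtype.ext
    rfl

lemma card_OD_eq : Nat.card (OD F n) = Nat.card (DD F n) * n.factorial := by
  classical
  letI : Fintype (OD F n) := Fintype.ofFinite _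
  letI : Fintype (DD F n) := Fintype.ofFinite _
  letI : ∀ d : DD F n, Fintype {f : OD F n // pi2 f = d} := fun d => Fintype.ofFinite _
  rw [← Nat.card_congr (Equiv.sigmaFiberEquiv (pi2 (F := F) (n := n)))]
  rw [Nat.card_eq_fintype_card, Fintype.card_sigma, Nat.card_eq_fintype_card]
  have hc : ∀ d : DD F n, Fintype.card {f : OD F n // pi2 f = d} = n.factorial := by
    intro d
    letI : Fintype {W : Submodule F (Fin n → F) // W ∈ d.1} := Fintype.ofFinite _
    have hcard : Fintype.card {W : Submodule F (Fin n → F) // W ∈ d.1} = n := by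
      rw [Fintype.card_coe]; exact d.2.1
    have h2 := Nat.card_congr (fiber2Equiv d)
    rw [Nat.card_eq_fintype_card, Nat.card_eq_fintype_card] at h2
    rw [h2, Fintype.card_equiv (Fintype.equivOfCardEq (by rw [hcard, Fintype.card_fin])),
      Fintype.card_fin]
  simp [hc, Finset.sum_const, Finset.card_univ, mul_comm]

/-- diagonalization pairs -/
def TT (F : Type) [Field F] [Fintype F] (n : ℕ) : Type :=
  {p : ((Fin n → F) →ₗ[F] (Fin n → F)) × Finset (Submodule F (Fin n → F)) //
    p.2.card = n ∧
    (⊥ : Submodule F (Fin n → F)) ∉ p.2 ∧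
    sSupIndep (p.2 : Set (Submodule F (Fin n → F))) ∧
    sSup (p.2 : Set (Submodule F (Fin n → F))) = ⊤ ∧
    ∀ W ∈ p.2, Module.finrank F W = 1 ∧ ∃ c : F, ∀ x ∈ W, p.1 x = c • x}

instance : Finite (TT F n) := by unfold TT; infer_instance

noncomputable local instance : DecidableEq (Submodule F (Fin n → F)) := Classical.decEq _

lemma DD_iSup_eq_top (d : DD F n) :
    (⨆ W : {W : Submodule F (Fin n → F) // W ∈ d.1}, (W : Submodule F (Fin n → F))) = ⊤ := by
  apply le_antisymm le_top
  refine le_trans (le_of_eq d.2.2.2.2.1.symm) ?_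
  apply sSup_le
  intro W hW
  exact le_iSup (fun W : {W // W ∈ d.1} => (W : Submodule F (Fin n → F))) ⟨W, hW⟩

lemma DD_isInternal (d : DD F n) :
    DirectSum.IsInternal
      (fun W : {W : Submodule F (Fin n → F) // W ∈ d.1} => (W : Submodule F (Fin n → F))) := by
  rw [DirectSum.isInternal_submodule_iff_iSupIndep_and_iSup_eq_top]
  refine ⟨?_, DD_iSup_eq_top d⟩
  exact (sSupIndep_iff ((d.1 : Finset (Submodule F (Fin n → F))) :
    Set (Submodule F (Fin n → F)))).1 d.2.2.2.1

open scoped DirectSum in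
noncomputable def scaleMap (d : DD F n) (c : {W : Submodule F (Fin n → F) // W ∈ d.1} → F) :
    (Fin n → F) →ₗ[F] (Fin n → F) :=
  let e := LinearEquiv.ofBijective (DirectSum.coeLinearMap
    (fun W : {W : Submodule F (Fin n → F) // W ∈ d.1} => (W : Submodule F (Fin n → F))))
    (DD_isInternal d)
  e.toLinearMap ∘ₗ
    (DFinsupp.mapRange.linearMap
      (fun W : {W : Submodule F (Fin n → F) // W ∈ d.1} =>
        c W • (LinearMap.id : W →ₗ[F] W))) ∘ₗ e.symm.toLinearMap

lemma scaleMap_apply (d : DD F n) (c : {W : Submodule F (Fin n → F) // W ∈ d.1} → F)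
    {W : Submodule F (Fin n → F)} (hW : W ∈ d.1) {x : Fin n → F} (hx : x ∈ W) :
    scaleMap d c x = c ⟨W, hW⟩ • x := by
  unfold scaleMap
  set A := fun W : {W : Submodule F (Fin n → F) // W ∈ d.1} => (W : Submodule F (Fin n → F))
  set e := LinearEquiv.ofBijective (DirectSum.coeLinearMap A) (DD_isInternal d) with he
  have h1 : e.symm x = DirectSum.of (fun W => ↥(A W)) ⟨W, hW⟩ ⟨x, hx⟩ := by
    rw [LinearEquiv.symm_apply_eq, he]
    exact (DirectSum.coeLinearMap_of A ⟨W, hW⟩ ⟨x, hx⟩).symm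
  rw [LinearMap.comp_apply, LinearMap.comp_apply]
  refine Eq.trans (congrArg (fun z => e.toLinearMap
    ((DFinsupp.mapRange.linearMap
      (fun W : {W : Submodule F (Fin n → F) // W ∈ d.1} =>
        c W • (LinearMap.id : A W →ₗ[F] A W))) z)) h1) ?_
  have h2 : (DFinsupp.mapRange.linearMap
      (fun W : {W : Submodule F (Fin n → F) // W ∈ d.1} => c W • (LinearMap.id : A W →ₗ[F] A W)))
      (DirectSum.of (fun W => ↥(A W)) ⟨W, hW⟩ ⟨x, hx⟩) =
      DirectSum.of (fun W => ↥(A W)) ⟨W, hW⟩ (c ⟨W, hW⟩ • ⟨x, hx⟩) := by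
    exact DFinsupp.mapRange_single (hf := fun i => by simp)
  refine Eq.trans (congrArg (fun z => e.toLinearMap z) h2) ?_
  exact DirectSum.coeLinearMap_of A ⟨W, hW⟩ _

lemma eq_of_agree (d : DD F n) {α β : (Fin n → F) →ₗ[F] (Fin n → F)}
    (h : ∀ W ∈ d.1, ∀ x ∈ W, α x = β x) : α = β := by
  have hker : ∀ W ∈ (d.1 : Set (Submodule F (Fin n → F))), W ≤ LinearMap.ker (α - β) := by
    intro W hW x hx
    rw [LinearMap.mem_ker, LinearMap.sub_apply, sub_eq_zero]
    exact h W hW x hx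
  have : (⊤ : Submodule F (Fin n → F)) ≤ LinearMap.ker (α - β) := by
    rw [← d.2.2.2.2.1]
    exact sSup_le hker
  refine LinearMap.ext fun x => ?_
  have hx : x ∈ (⊤ : Submodule F (Fin n → F)) := trivial
  have h2 := this hx
  rw [LinearMap.mem_ker, LinearMap.sub_apply, sub_eq_zero] at h2
  exact h2

lemma DD_exists_ne_zero (d : DD F n) {W : Submodule F (Fin n → F)} (hW : W ∈ d.1) :
    ∃ x ∈ W, x ≠ (0 : Fin n → F) := by
  rw [← Submodule.ne_bot_iff]
  intro h
  exact d.2.2.1 (h ▸ hW)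

noncomputable def pi3 (p : TT F n) : DD F n :=
  ⟨p.1.2, p.2.1, p.2.2.1, p.2.2.2.1, p.2.2.2.2.1, fun W hW => (p.2.2.2.2.2 W hW).1⟩

noncomputable def fiber3Equiv (d : DD F n) :
    {p : TT F n // pi3 p = d} ≃ ({W : Submodule F (Fin n → F) // W ∈ d.1} → F) where
  toFun p W := Classical.choose
    ((p.1.2.2.2.2.2 W.1 (by
      have h : p.1.1.2 = d.1 := congrArg Subtype.val p.2
      rw [h]; exact W.2)).2)
  invFun c := ⟨⟨(scaleMap d c, d.1), d.2.1, d.2.2.1, d.2.2.2.1, d.2.2.2.2.1,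
      fun W hW => ⟨d.2.2.2.2.2 W hW, c ⟨W, hW⟩, fun x hx => scaleMap_apply d c hW hx⟩⟩,
    by apply Subtype.ext; rfl⟩
  left_inv p := by
    apply Subtype.ext
    have h : p.1.1.2 = d.1 := congrArg Subtype.val p.2
    apply Subtype.ext
    apply Prod.ext
    · -- linear maps agree
      apply eq_of_agree d
      intro W hW x hx
      have hW' : W ∈ p.1.1.2 := by rw [h]; exact hW
      have hspec := Classical.choose_spec ((p.1.2.2.2.2.2 W hW').2)
      rw [scaleMap_apply d _ hW hx, hspec x hx]
    · exact h.symm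
  right_inv c := by
    funext W
    obtain ⟨x, hx, hx0⟩ := DD_exists_ne_zero d W.2
    have hspec := Classical.choose_spec
      (((⟨⟨(scaleMap d c, d.1), d.2.1, d.2.2.1, d.2.2.2.1, d.2.2.2.2.1,
        fun W hW => ⟨d.2.2.2.2.2 W hW, c ⟨W, hW⟩, fun x hx => scaleMap_apply d c hW hx⟩⟩,
        by apply Subtype.ext; rfl⟩ :
        {p : TT F n // pi3 p = d}).1.2.2.2.2.2 W.1 (by exact W.2)).2) x hx
    rw [scaleMap_apply d c W.2 hx] at hspec
    exact (smul_left_injective F hx0 hspec.symm)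

lemma card_TT_eq : Nat.card (TT F n) = Nat.card (DD F n) * q ^ n := by
  classical
  letI : Fintype (TT F n) := Fintype.ofFinite _
  letI : Fintype (DD F n) := Fintype.ofFinite _
  letI : ∀ d : DD F n, Fintype {p : TT F n // pi3 p = d} := fun d => Fintype.ofFinite _
  rw [← Nat.card_congr (Equiv.sigmaFiberEquiv (pi3 (F := F) (n := n)))]
  rw [Nat.card_eq_fintype_card, Fintype.card_sigma, Nat.card_eq_fintype_card]
  have hc : ∀ d : DD F n, Fintype.card {p : TT F n // pi3 p = d} = q ^ n := by
    intro d
    letI : Fintype {W : Submodule F (Fin n → F) // W ∈ d.1} := Fintype.ofFinite _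
    have h2 := Nat.card_congr (fiber3Equiv d)
    rw [Nat.card_eq_fintype_card, Nat.card_eq_fintype_card] at h2
    rw [h2, Fintype.card_fun, Fintype.card_coe, d.2.1]
  simp [hc, Finset.sum_const, Finset.card_univ, mul_comm]

lemma master_count :
    (q - 1) ^ n * n.factorial * Nat.card (TT F n) = q ^ n * gammaQ q n := by
  have h1 := card_LI (F := F) (n := n)
  have h2 := card_LI_eq (F := F) (n := n)
  have h3 := card_OD_eq (F := F) (n := n)
  have h4 := card_TT_eq (F := F) (n := n)
  rw [h4, ← h1, h2, h3]
  ring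

lemma gammaQ_pos (hq : 2 ≤ Fintype.card F) : 0 < gammaQ q n := by
  apply Finset.prod_pos
  intro i hi
  have : q ^ i < q ^ n := Nat.pow_lt_pow_right (by omega) (Finset.mem_range.1 hi)
  omega

end Aux

lemma diagCount_eq_card_TT (F : Type) [Field F] [Fintype F] (n : ℕ) :
    diagCount F n = Nat.card (TT F n) := rfl

/-- The generating series of diagonalizations of endomorphisms is `exp(qx/(q-1))`. -/
theorem diagonalization_generating_series (F : Type) [Field F] [Fintype F] :
    PowerSeries.mk (fun n => (diagCount F n : ℚ) / (gammaQ (Fintype.card F) n : ℚ)) =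
      PowerSeries.rescale
        ((Fintype.card F : ℚ) / ((Fintype.card F : ℚ) - 1)) (PowerSeries.exp ℚ) := by
  ext n
  rw [PowerSeries.coeff_mk, PowerSeries.coeff_rescale, PowerSeries.coeff_exp]
  have hq : 2 ≤ Fintype.card F := Fintype.one_lt_card
  have hγ : (0 : ℚ) < (gammaQ (Fintype.card F) n : ℚ) := by
    exact_mod_cast gammaQ_pos (F := F) (n := n) hq
  have hγ' : (gammaQ (Fintype.card F) n : ℚ) ≠ 0 := ne_of_gt hγ
  have hq1 : ((Fintype.card F : ℚ) - 1) ≠ 0 := by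
    have : (2 : ℚ) ≤ (Fintype.card F : ℚ) := by exact_mod_cast hq
    linarith
  have hfac : ((n.factorial : ℚ)) ≠ 0 := by
    exact_mod_cast n.factorial_ne_zero
  have key : ((Fintype.card F : ℚ) - 1) ^ n * (n.factorial : ℚ) * (diagCount F n : ℚ) =
      (Fintype.card F : ℚ) ^ n * (gammaQ (Fintype.card F) n : ℚ) := by
    have h := master_count (F := F) (n := n)
    rw [← diagCount_eq_card_TT] at h
    have hcast : (((Fintype.card F - 1 : ℕ) : ℚ)) = (Fintype.card F : ℚ) - 1 := by
      rw [Nat.cast_sub (by omega)]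
      norm_num
    calc ((Fintype.card F : ℚ) - 1) ^ n * (n.factorial : ℚ) * (diagCount F n : ℚ)
        = (((Fintype.card F - 1) ^ n * n.factorial * diagCount F n : ℕ) : ℚ) := by
          push_cast [hcast]
          ring
      _ = (((Fintype.card F) ^ n * gammaQ (Fintype.card F) n : ℕ) : ℚ) := by
          exact_mod_cast h
      _ = (Fintype.card F : ℚ) ^ n * (gammaQ (Fintype.card F) n : ℚ) := by push_cast; ring
  have halg : (algebraMap ℚ ℚ) (1 / (n.factorial : ℚ)) = 1 / (n.factorial : ℚ) := by
    simp
  rw [halg, div_pow, div_mul_div_comm, mul_one,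
    div_eq_div_iff hγ' (mul_ne_zero (pow_ne_zero n hq1) hfac)]
  linear_combination key
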